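/- Let X be a compact topological space with a base A of cardinality at most the weight of X, closed under pairwise intersections in the sense that U ∩ V ∈ A ∪ {∅} for all U, V ∈ A. Suppose κ ≤ w(X) and X admits a ⟨w(X), κ⟩-splitter. Then A contains a subfamily which is a base of X and is κ^op-like (no member is contained in κ-many members). -/
import Mathlib


open Cardinal Set

universe u

variable {X : Type u}

/-- `B` is a base for the topology of `X`. -/
def IsBase [TopologicalSpace X] (B : Set (Set X)) : Prop :=
  (∀ U ∈ B, IsOpen U) ∧ ∀ W : Set X, IsOpen W → ∀ p ∈ W, ∃ U ∈ B, p ∈ U ∧ U ⊆ W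

/-- `B` is a local base at `p`. -/
def IsLocalBase [TopologicalSpace X] (p : X) (B : Set (Set X)) : Prop :=
  (∀ U ∈ B, IsOpen U ∧ p ∈ U) ∧ ∀ W : Set X, IsOpen W → p ∈ W → ∃ U ∈ B, U ⊆ W

/-- `B` is a local π-base at `p`. -/
def IsLocalPiBase [TopologicalSpace X] (p : X) (B : Set (Set X)) : Prop :=
  (∀ U ∈ B, IsOpen U ∧ U.Nonempty) ∧ ∀ W : Set X, IsOpen W → p ∈ W → ∃ U ∈ B, U ⊆ W

/-- The weight of `X`: the least infinite cardinal `κ` such that `X` has a base of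
cardinality at most `κ`. -/
noncomputable def weight (X : Type u) [TopologicalSpace X] : Cardinal.{u} :=
  sInf {κ | ℵ₀ ≤ κ ∧ ∃ B : Set (Set X), IsBase B ∧ #B ≤ κ}

/-- The character of `p` in `X`. -/
noncomputable def character [TopologicalSpace X] (p : X) : Cardinal.{u} :=
  sInf {κ | ℵ₀ ≤ κ ∧ ∃ B : Set (Set X), IsLocalBase p B ∧ #B ≤ κ}

/-- The π-character of `p` in `X`. -/
noncomputable def piCharacter [TopologicalSpace X] (p : X) : Cardinal.{u} :=
  sInf {κ | ℵ₀ ≤ κ ∧ ∃ B : Set (Set X), IsLocalPiBase p B ∧ #B ≤ κ}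

/-- A family of sets (ordered by `⊆`) is `κ^op`-like if no member is contained in
`κ`-many members. -/
def IsOpLike {Y : Type u} (B : Set (Set Y)) (κ : Cardinal.{u}) : Prop :=
  ∀ U ∈ B, #{V : Set Y // V ∈ B ∧ U ⊆ V} < κ

/-- The Noetherian type of `X`: the least infinite `κ` such that `X` has a
`κ^op`-like base. -/
noncomputable def Nt (X : Type u) [TopologicalSpace X] : Cardinal.{u} :=
  sInf {κ | ℵ₀ ≤ κ ∧ ∃ B : Set (Set X), IsBase B ∧ IsOpLike B κ}

/-- `⟨F i⟩` is a `⟨#ι, κ⟩`-splitter of `X`: a sequence of finite open covers such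
that for every index set `I` of cardinality `κ` and every choice `U i ∈ F i`
(`i ∈ I`), the interior of `⋂_{i ∈ I} U i` is empty. -/
def IsSplitter [TopologicalSpace X] {ι : Type u} (F : ι → Set (Set X))
    (κ : Cardinal.{u}) : Prop :=
  (∀ i, (F i).Finite ∧ (∀ U ∈ F i, IsOpen U) ∧ ⋃₀ F i = Set.univ) ∧
  ∀ (I : Set ι) (U : ι → Set X), #I = κ → (∀ i ∈ I, U i ∈ F i) →
    interior (⋂ i ∈ I, U i) = ∅

/-- Lemma: if a compact space `X` has a base `A` of size at most `w(X)` closed under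
pairwise intersections (in `A ∪ {∅}`), `κ ≤ w(X)`, and `X` has a
`⟨w(X), κ⟩`-splitter, then `A` contains a `κ^op`-like base of `X`. -/
theorem opLike_base_of_splitter
    [TopologicalSpace X] [CompactSpace X]
    (A : Set (Set X)) (hbase : IsBase A) (hsize : #A ≤ weight X)
    (hinter : ∀ U ∈ A, ∀ V ∈ A, U ∩ V ∈ A ∨ U ∩ V = ∅)
    (κ : Cardinal.{u}) (hκω : ℵ₀ ≤ κ) (hκ : κ ≤ weight X)
    (ι : Type u) (F : ι → Set (Set X)) (hι : #ι = weight X)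
    (hsp : IsSplitter F κ) :
    ∃ B ⊆ A, IsBase B ∧ IsOpLike B κ := by
  rcases isEmpty_or_nonempty X with hX | hX
  · exact ⟨∅, empty_subset _, ⟨fun U h => h.elim, fun W _ p _ => (IsEmpty.false p).elim⟩,
      fun U h => h.elim⟩
  obtain ⟨p0⟩ := hX
  obtain ⟨U0, hU0A, -, -⟩ := hbase.2 Set.univ isOpen_univ p0 (mem_univ _)
  haveI : Nonempty ↥A := ⟨⟨U0, hU0A⟩⟩
  obtain ⟨f⟩ := (Cardinal.le_def _ _).mp (hsize.trans hι.symm.le)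
  set a : ι → ↥A := Function.invFun f with ha
  have hasurj : Function.Surjective a := Function.invFun_surjective f.injective
  -- refinement of each cover `F i` by basic open sets
  have hpick : ∀ (i : ι) (p : X), ∃ V, V ∈ A ∧ p ∈ V ∧ ∃ U, U ∈ F i ∧ V ⊆ U := by
    intro i p
    have hp : p ∈ ⋃₀ F i := by rw [(hsp.1 i).2.2]; trivial
    obtain ⟨U, hUF, hpU⟩ := hp
    obtain ⟨V, hVA, hpV, hVU⟩ := hbase.2 U ((hsp.1 i).2.1 U hUF) p hpU
    exact ⟨V, hVA, hpV, U, hUF, hVU⟩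
  choose s hsA hps Uf hUfF hsUf using hpick
  have hsub : ∀ i : ι, ∃ t : Finset X, Set.univ ⊆ ⋃ p ∈ t, s i p := fun i =>
    isCompact_univ.elim_finite_subcover (s i) (fun p => hbase.1 _ (hsA i p))
      (fun p _ => mem_iUnion.mpr ⟨p, hps i p⟩)
  choose t ht using hsub
  set B : Set (Set X) := {W | ∃ i : ι, ∃ p ∈ t i, W = ↑(a i) ∩ s i p ∧ W.Nonempty} with hBdef
  have hBA : B ⊆ A := by
    rintro W ⟨i, p, hp, rfl, hne⟩
    rcases hinter _ (a i).2 _ (hsA i p) with h | h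
    · exact h
    · exact absurd h (Set.nonempty_iff_ne_empty.mp hne)
  have hBopen : ∀ W ∈ B, IsOpen W := fun W hW => hbase.1 W (hBA hW)
  have hBbase : IsBase B := by
    refine ⟨hBopen, fun W hW q hq => ?_⟩
    obtain ⟨V, hVA, hqV, hVW⟩ := hbase.2 W hW q hq
    obtain ⟨i, hi⟩ := hasurj ⟨V, hVA⟩
    have hqcov : q ∈ ⋃ p ∈ t i, s i p := ht i (mem_univ q)
    simp only [mem_iUnion] at hqcov
    obtain ⟨p, hp, hqs⟩ := hqcov
    have haiV : (↑(a i) : Set X) = V := by rw [hi]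
    have hq1 : q ∈ (↑(a i) : Set X) := haiV.symm ▸ hqV
    refine ⟨↑(a i) ∩ s i p, ⟨i, p, hp, rfl, ⟨q, hq1, hqs⟩⟩, ⟨hq1, hqs⟩, ?_⟩
    exact (inter_subset_left).trans (haiV.le.trans hVW)
  refine ⟨B, hBA, hBbase, ?_⟩
  intro W₀ hW₀
  by_contra hc
  push_neg at hc
  obtain ⟨i₀, p₀, hp₀, hW₀eq, hW₀ne⟩ := hW₀
  have hW₀B : W₀ ∈ B := ⟨i₀, p₀, hp₀, hW₀eq, hW₀ne⟩
  have hW₀open : IsOpen W₀ := hBopen W₀ hW₀B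
  have hwit : ∀ w : {V : Set X // V ∈ B ∧ W₀ ⊆ V},
      ∃ i, ∃ p, p ∈ t i ∧ (w : Set X) = ↑(a i) ∩ s i p := by
    intro w
    obtain ⟨i, p, hp, he, -⟩ := w.2.1
    exact ⟨i, p, hp, he⟩
  choose φ pw hpw hwe using hwit
  have hS'sub : {V : Set X | V ∈ B ∧ W₀ ⊆ V} ⊆
      ⋃ i ∈ Set.range φ, (fun p => (↑(a i) : Set X) ∩ s i p) '' ↑(t i) := by
    intro V hV
    refine mem_iUnion₂.mpr ⟨φ ⟨V, hV⟩, mem_range_self _, pw ⟨V, hV⟩, hpw ⟨V, hV⟩, ?_⟩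
    exact (hwe ⟨V, hV⟩).symm
  rcases Set.finite_or_infinite (Set.range φ) with hfin | hinf
  · have hS'fin : {V : Set X | V ∈ B ∧ W₀ ⊆ V}.Finite :=
      Set.Finite.subset (Set.Finite.biUnion hfin
        (fun i _ => ((t i).finite_toSet.image _))) hS'sub
    exact absurd hc (hS'fin.lt_aleph0.trans_le hκω).not_ge
  · haveI : Infinite ↥(Set.range φ) := hinf.to_subtype
    have h1 : #{V : Set X // V ∈ B ∧ W₀ ⊆ V} ≤ #(Set.range φ) * ℵ₀ := by
      refine (Cardinal.mk_le_mk_of_subset hS'sub).trans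
        ((Cardinal.mk_biUnion_le _ _).trans (mul_le_mul_right (ciSup_le' fun i => ?_) _))
      exact (((t i.1).finite_toSet.image _).lt_aleph0).le
    have h2 : κ ≤ #(Set.range φ) := by
      have h3 := hc.trans h1
      rwa [Cardinal.mul_aleph0_eq (Cardinal.aleph0_le_mk _)] at h3
    obtain ⟨I, hIsub, hIcard⟩ := Cardinal.le_mk_iff_exists_subset.mp h2
    have hchoice : ∀ i : ι, ∃ Ui : Set X, i ∈ I → Ui ∈ F i ∧ W₀ ⊆ Ui := by
      intro i
      by_cases hi : i ∈ I
      · obtain ⟨w, hw⟩ := hIsub hi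
        subst hw
        refine ⟨Uf (φ w) (pw w), fun _ => ⟨hUfF _ _, ?_⟩⟩
        refine w.2.2.trans ((hwe w).le.trans ((inter_subset_right).trans (hsUf _ _)))
      · exact ⟨∅, fun h => absurd h hi⟩
    choose Uc hUc using hchoice
    have hint := hsp.2 I Uc hIcard (fun i hi => (hUc i hi).1)
    have hW₀int : W₀ ⊆ interior (⋂ i ∈ I, Uc i) :=
      interior_maximal (subset_iInter₂ fun i hi => (hUc i hi).2) hW₀open
    rw [hint] at hW₀int
    obtain ⟨x, hx⟩ := hW₀ne
    exact (hW₀int hx).elim
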